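/- Let p ≥ 0 and q ≥ 0 be integers. The inequalities p + 1/2 < Σ_{i=1}^{p+q} 1/(nᵢ - 2) < p + 1 have a solution in integers n₁,...,n_{p+q} with each nᵢ > 2 if and only if q ≥ 2; moreover, when q ≥ 2 there are infinitely many such solutions. -/

import Mathlib

def gfun (p q k : ℕ) : ℕ → ℤ := fun j => if j < p then 3 else if j = p then 4 else 2*(q:ℤ) + k + 2

lemma gfun_gt (p q k j : ℕ) (hq : 2 ≤ q) : 2 < gfun p q k j := by
  unfold gfun; split_ifs <;> omega

lemma sum_eval (p q k : ℕ) (hq : 2 ≤ q) :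
    ∑ i : Fin (p+q), 1/((gfun p q k i.val : ℚ) - 2)
      = (p : ℚ) + 1/2 + ((q:ℚ)-1)/(2*q+k) := by
  rw [Fin.sum_univ_eq_sum_range (fun j => 1/((gfun p q k j : ℚ) - 2))]
  rw [Finset.range_eq_Ico, ← Finset.sum_Ico_consecutive _ (Nat.zero_le p) (Nat.le_add_right p q)]
  have h1 : ∑ j ∈ Finset.Ico 0 p, 1/((gfun p q k j : ℚ) - 2) = p := by
    have hc : ∀ j ∈ Finset.Ico 0 p, 1/((gfun p q k j : ℚ) - 2) = 1 := by
      intro j hj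
      have hjp : j < p := (Finset.mem_Ico.1 hj).2
      simp only [gfun, if_pos hjp]
      norm_num
    rw [Finset.sum_congr rfl hc, Finset.sum_const, Nat.card_Ico]
    simp
  have h2 : ∑ j ∈ Finset.Ico p (p+q), 1/((gfun p q k j : ℚ) - 2)
      = 1/2 + ((q:ℚ)-1)/(2*q+k) := by
    rw [Finset.sum_Ico_eq_sum_range]
    simp only [Nat.add_sub_cancel_left]
    obtain ⟨r, hr⟩ : ∃ r, q = r + 1 := ⟨q - 1, by omega⟩
    subst hr
    rw [Finset.sum_range_succ']
    have hz : (gfun p (r+1) k (p + 0) : ℚ) = 4 := by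
      simp [gfun]
    have ho : ∀ i ∈ Finset.range r, 1/((gfun p (r+1) k (p + (i+1)) : ℚ) - 2)
        = 1/(2*(r+1:ℚ) + k) := by
      intro i _
      have hh1 : ¬ (p + (i+1) < p) := by omega
      have hh2 : ¬ (p + (i+1) = p) := by omega
      simp only [gfun, if_neg hh1, if_neg hh2]
      push_cast; ring_nf
    rw [Finset.sum_congr rfl ho, Finset.sum_const, hz]
    have hd : (0:ℚ) < 2*((r:ℚ)+1) + k := by positivity
    push_cast
    rw [Finset.card_range]
    rw [nsmul_eq_mul]
    field_simp
    ring
  rw [h1, h2]; ring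

lemma gfun_mem (p q k : ℕ) (hq : 2 ≤ q) :
    (fun i : Fin (p+q) => gfun p q k i.val) ∈
      {n : Fin (p + q) → ℤ | (∀ i, 2 < n i) ∧
        (p : ℚ) + 1 / 2 < ∑ i, 1 / ((n i : ℚ) - 2) ∧
        ∑ i, 1 / ((n i : ℚ) - 2) < (p : ℚ) + 1} := by
  have hq' : (2:ℚ) ≤ q := by exact_mod_cast hq
  have hk : (0:ℚ) ≤ k := by positivity
  have hd : (0:ℚ) < 2*q + k := by linarith
  refine ⟨fun i => gfun_gt p q k i.val hq, ?_, ?_⟩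
  · rw [sum_eval p q k hq]
    have : (0:ℚ) < ((q:ℚ)-1)/(2*q+k) := div_pos (by linarith) hd
    linarith
  · rw [sum_eval p q k hq]
    have : ((q:ℚ)-1)/(2*q+k) < 1/2 := by
      rw [div_lt_iff₀ hd]; linarith
    linarith

theorem stmt14 (p q : ℕ) :
    ((∃ n : Fin (p + q) → ℤ, (∀ i, 2 < n i) ∧
        (p : ℚ) + 1 / 2 < ∑ i, 1 / ((n i : ℚ) - 2) ∧
        ∑ i, 1 / ((n i : ℚ) - 2) < (p : ℚ) + 1) ↔ 2 ≤ q)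
    ∧ (2 ≤ q →
        {n : Fin (p + q) → ℤ | (∀ i, 2 < n i) ∧
          (p : ℚ) + 1 / 2 < ∑ i, 1 / ((n i : ℚ) - 2) ∧
          ∑ i, 1 / ((n i : ℚ) - 2) < (p : ℚ) + 1}.Infinite) := by
  constructor
  · constructor
    · rintro ⟨n, hn, hlo, hhi⟩
      by_contra hq
      push_neg at hq
      have hden : ∀ i, (1:ℚ) ≤ (n i : ℚ) - 2 := by
        intro i
        have h3 : (3:ℤ) ≤ n i := hn i
        have : (3:ℚ) ≤ (n i : ℚ) := by exact_mod_cast h3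
        linarith
      have hle1 : ∀ i, 1 / ((n i : ℚ) - 2) ≤ 1 := by
        intro i
        rw [div_le_one (by linarith [hden i])]
        linarith [hden i]
      interval_cases q
      · -- q = 0 : sum ≤ p < p + 1/2
        have hsum : ∑ i : Fin (p+0), 1 / ((n i : ℚ) - 2) ≤ p := by
          calc ∑ i : Fin (p+0), 1 / ((n i : ℚ) - 2) ≤ ∑ _i : Fin (p+0), (1:ℚ) :=
                Finset.sum_le_sum fun i _ => hle1 i
            _ = p := by simp
        linarith
      · -- q = 1
        by_cases hall : ∀ i, n i = 3
        · have hsum : ∑ i : Fin (p+1), 1 / ((n i : ℚ) - 2) = p + 1 := by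
            have : ∀ i : Fin (p+1), 1 / ((n i : ℚ) - 2) = 1 := by
              intro i; rw [hall i]; norm_num
            rw [Finset.sum_congr rfl fun i _ => this i]
            simp
          linarith
        · push_neg at hall
          obtain ⟨j, hj⟩ := hall
          have hj4 : (4:ℤ) ≤ n j := by have := hn j; omega
          have hj4' : (4:ℚ) ≤ (n j : ℚ) := by exact_mod_cast hj4
          have hjle : 1 / ((n j : ℚ) - 2) ≤ 1/2 := by
            rw [div_le_div_iff₀ (by linarith) (by norm_num)]
            linarith
          have hrest : ∑ i ∈ Finset.univ.erase j, 1 / ((n i : ℚ) - 2) ≤ p := by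
            calc ∑ i ∈ Finset.univ.erase j, 1 / ((n i : ℚ) - 2)
                ≤ ∑ _i ∈ Finset.univ.erase j, (1:ℚ) :=
                  Finset.sum_le_sum fun i _ => hle1 i
              _ = ((Finset.univ.erase j).card : ℚ) := by simp
              _ = p := by
                  rw [Finset.card_erase_of_mem (Finset.mem_univ j)]
                  simp
          have hsplit : ∑ i : Fin (p+1), 1 / ((n i : ℚ) - 2)
              = 1 / ((n j : ℚ) - 2) + ∑ i ∈ Finset.univ.erase j, 1 / ((n i : ℚ) - 2) :=
            (Finset.add_sum_erase _ _ (Finset.mem_univ j)).symm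
          linarith [hsplit ▸ hlo]
    · intro hq
      exact ⟨fun i => gfun p q 0 i.val, gfun_mem p q 0 hq⟩
  · intro hq
    apply Set.infinite_of_injective_forall_mem
      (f := fun k : ℕ => fun i : Fin (p+q) => gfun p q k i.val)
    · intro k1 k2 h
      have hlt : p + 1 < p + q := by omega
      have := congrFun h ⟨p+1, hlt⟩
      simp only [gfun] at this
      have h1 : ¬ (p + 1 < p) := by omega
      have h2 : ¬ (p + 1 = p) := by omega
      rw [if_neg h1, if_neg h2, if_neg h1, if_neg h2] at this
      omega
    · intro k
      exact gfun_mem p q k hq
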